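/- Let 0 < α < 1 with α(1+α) ≠ 1 and Π > 0, and consider the real-variable total-reward function T : ℝ → ℝ, T(t) = (1 - (α(1+α))^{t})·Π / ((1+α)^{t} - α(1+α)^{t+1}). Then T attains its maximum over (0,∞) at the unique real number n' = log(-log(1+α)/log α) / (log α + log(1+α)), i.e. the unique n' > 0 with (α(1+α))^{n'} = -log(1+α)/log α; T is strictly increasing on (0, n') and strictly decreasing on (n', ∞). -/

import Mathlib

open Real Set

theorem GCRM_total_reward_max (α Budget : ℝ) (hα0 : 0 < α) (hα1 : α < 1)
    (hne : α * (1 + α) ≠ 1) (hBudget : 0 < Budget)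
    (T : ℝ → ℝ)
    (hT : ∀ t : ℝ, T t =
      (1 - (α * (1 + α)) ^ t) * Budget / ((1 + α) ^ t - α * (1 + α) ^ (t + 1)))
    (n' : ℝ)
    (hn' : n' = Real.log (-Real.log (1 + α) / Real.log α) /
      (Real.log α + Real.log (1 + α))) :
    0 < n' ∧
    (α * (1 + α)) ^ n' = -Real.log (1 + α) / Real.log α ∧
    (∀ t : ℝ, 0 < t → (α * (1 + α)) ^ t = -Real.log (1 + α) / Real.log α → t = n') ∧
    (∀ t : ℝ, 0 < t → T t ≤ T n') ∧
    StrictMonoOn T (Set.Ioo 0 n') ∧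
    StrictAntiOn T (Set.Ioi n') := by
  have hA1 : (0:ℝ) < 1 + α := by linarith
  set β : ℝ := α * (1 + α) with hβ
  have hβ0 : 0 < β := mul_pos hα0 hA1
  have hL1 : 0 < Real.log (1 + α) := Real.log_pos (by linarith)
  have hL2 : Real.log α < 0 := Real.log_neg hα0 hα1
  set γ : ℝ := -Real.log (1 + α) / Real.log α with hγ
  have hγ0 : 0 < γ := div_pos_of_neg_of_neg (by linarith) hL2
  have hlogβ : Real.log β = Real.log α + Real.log (1 + α) :=
    Real.log_mul (ne_of_gt hα0) (ne_of_gt hA1)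
  have hlogβne : Real.log β ≠ 0 := by
    intro h
    have : β = 1 := by
      have := Real.exp_log hβ0
      rw [h, Real.exp_zero] at this; linarith
    exact hne this
  have hn'eq : n' = Real.log γ / Real.log β := by rw [hn', hlogβ]
  -- γ - 1 = log β / (-log α)
  have hLα : Real.log α ≠ 0 := ne_of_lt hL2
  have hγ1 : γ - 1 = Real.log β / (-Real.log α) := by
    rw [hγ, hlogβ, div_neg]
    field_simp
    ring
  have hβn' : β ^ n' = γ := by
    rw [hn'eq, Real.rpow_def_of_pos hβ0]
    rw [mul_div_assoc', mul_comm, mul_div_assoc, div_self hlogβne, mul_one,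
      Real.exp_log hγ0]
  have hn'pos : 0 < n' := by
    rcases lt_or_gt_of_ne hlogβne with h | h
    · have hγlt : γ < 1 := by
        have : Real.log β / (-Real.log α) < 0 :=
          div_neg_of_neg_of_pos h (by linarith)
        linarith [hγ1]
      have : Real.log γ < 0 := Real.log_neg hγ0 hγlt
      rw [hn'eq]; exact div_pos_of_neg_of_neg this h
    · have hγgt : 1 < γ := by
        have : 0 < Real.log β / (-Real.log α) :=
          div_pos h (by linarith)
        linarith [hγ1]
      have : 0 < Real.log γ := Real.log_pos hγgt
      rw [hn'eq]; exact div_pos this h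
  -- uniqueness
  have huniq : ∀ t : ℝ, 0 < t → β ^ t = γ → t = n' := by
    intro t _ ht
    have h1 : Real.log (β ^ t) = Real.log (β ^ n') := by rw [ht, hβn']
    rw [Real.log_rpow hβ0, Real.log_rpow hβ0] at h1
    exact mul_right_cancel₀ hlogβne h1
  -- rewrite T
  have h1βne : 1 - β ≠ 0 := fun h => hne (by linarith)
  set c : ℝ := Budget / (1 - β) with hc
  have hTeq : ∀ t : ℝ, T t = c * ((1 + α) ^ (-t) - α ^ t) := by
    intro t
    have hpow : ((1:ℝ) + α) ^ (t + 1) = (1 + α) ^ t * (1 + α) := by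
      rw [Real.rpow_add hA1, Real.rpow_one]
    have hmul : β ^ t = α ^ t * (1 + α) ^ t := Real.mul_rpow hα0.le hA1.le
    have hneg : ((1:ℝ) + α) ^ (-t) = ((1 + α) ^ t)⁻¹ := Real.rpow_neg hA1.le t |>.trans rfl
    have hpt : ((1:ℝ) + α) ^ t ≠ 0 := ne_of_gt (Real.rpow_pos_of_pos hA1 t)
    have hden : ((1:ℝ) + α) ^ t - α * (1 + α) ^ (t + 1) = (1 + α) ^ t * (1 - β) := by
      rw [hpow, hβ]; ring
    rw [hT, hden, hmul, hneg, hc]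
    field_simp
  -- derivative
  set D : ℝ → ℝ := fun t => c * (-Real.log α) * (1 + α) ^ (-t) * (β ^ t - γ) with hD
  have hderiv : ∀ t : ℝ, HasDerivAt T (D t) t := by
    intro t
    have h1 : HasDerivAt (fun x : ℝ => ((1:ℝ) + α) ^ (-x))
        ((1 + α) ^ (-t) * Real.log (1 + α) * (-1)) t := by
      exact ((Real.hasStrictDerivAt_const_rpow hA1 (-t)).hasDerivAt).comp t (hasDerivAt_neg t)
    have h2 : HasDerivAt (fun x : ℝ => α ^ x) (α ^ t * Real.log α) t :=
      (Real.hasStrictDerivAt_const_rpow hα0 t).hasDerivAt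
    have h3 := ((h1.sub h2).const_mul c)
    have hfn : T = fun x : ℝ => c * ((1 + α) ^ (-x) - α ^ x) := funext hTeq
    rw [hfn]
    convert h3 using 1
    case e'_4 => rfl
    case e'_5 => rfl
    case e'_8 => rfl
    -- D t = c * ((1+α)^(-t) * log(1+α) * (-1) - α^t * log α)
    have hab : α ^ t = β ^ t * ((1:ℝ) + α) ^ (-t) := by
      rw [Real.mul_rpow hα0.le hA1.le, Real.rpow_neg hA1.le]
      field_simp [ne_of_gt (Real.rpow_pos_of_pos hA1 t)]
    rw [hD, hab, hγ]
    field_simp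
    ring
  have hβne1 : β ≠ 1 := hne
  -- sign of D
  have hDpos : ∀ t : ℝ, t < n' → 0 < D t := by
    intro t ht
    have hp : 0 < ((1:ℝ) + α) ^ (-t) := Real.rpow_pos_of_pos hA1 _
    rcases lt_or_gt_of_ne hβne1 with h | h
    · have hc0 : 0 < c := div_pos hBudget (by linarith)
      have : β ^ n' < β ^ t := Real.rpow_lt_rpow_of_exponent_gt hβ0 h ht
      rw [hβn'] at this
      have h4 : 0 < β ^ t - γ := by linarith
      have := mul_pos (mul_pos (mul_pos hc0 (by linarith : (0:ℝ) < -Real.log α)) hp) h4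
      simpa [hD] using this
    · have hc0 : c < 0 := div_neg_of_pos_of_neg hBudget (by linarith)
      have : β ^ t < β ^ n' := Real.rpow_lt_rpow_of_exponent_lt h ht
      rw [hβn'] at this
      have h4 : β ^ t - γ < 0 := by linarith
      have h5 : c * (-Real.log α) * (1 + α) ^ (-t) < 0 := by
        apply mul_neg_of_neg_of_pos _ hp
        exact mul_neg_of_neg_of_pos hc0 (by linarith)
      have := mul_pos_of_neg_of_neg h5 h4
      simpa [hD] using this
  have hDneg : ∀ t : ℝ, n' < t → D t < 0 := by
    intro t ht
    have hp : 0 < ((1:ℝ) + α) ^ (-t) := Real.rpow_pos_of_pos hA1 _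
    rcases lt_or_gt_of_ne hβne1 with h | h
    · have hc0 : 0 < c := div_pos hBudget (by linarith)
      have : β ^ t < β ^ n' := Real.rpow_lt_rpow_of_exponent_gt hβ0 h ht
      rw [hβn'] at this
      have h4 : β ^ t - γ < 0 := by linarith
      have h5 : 0 < c * (-Real.log α) * (1 + α) ^ (-t) :=
        mul_pos (mul_pos hc0 (by linarith)) hp
      have := mul_neg_of_pos_of_neg h5 h4
      simpa [hD] using this
    · have hc0 : c < 0 := div_neg_of_pos_of_neg hBudget (by linarith)
      have : β ^ n' < β ^ t := Real.rpow_lt_rpow_of_exponent_lt h ht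
      rw [hβn'] at this
      have h4 : 0 < β ^ t - γ := by linarith
      have h5 : c * (-Real.log α) * (1 + α) ^ (-t) < 0 := by
        apply mul_neg_of_neg_of_pos _ hp
        exact mul_neg_of_neg_of_pos hc0 (by linarith)
      have := mul_neg_of_neg_of_pos h5 h4
      simpa [hD] using this
  have hcont : Continuous T :=
    continuous_iff_continuousAt.2 fun t => (hderiv t).continuousAt
  have hderiv' : ∀ t : ℝ, deriv T t = D t := fun t => (hderiv t).deriv
  have hmono : StrictMonoOn T (Set.Ioc 0 n') := by
    apply strictMonoOn_of_deriv_pos (convex_Ioc 0 n') hcont.continuousOn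
    intro x hx
    rw [interior_Ioc] at hx
    rw [hderiv' x]
    exact hDpos x hx.2
  have hanti : StrictAntiOn T (Set.Ici n') := by
    apply strictAntiOn_of_deriv_neg (convex_Ici n') hcont.continuousOn
    intro x hx
    rw [interior_Ici] at hx
    rw [hderiv' x]
    exact hDneg x hx
  refine ⟨hn'pos, hβn', huniq, ?_, ?_, ?_⟩
  · intro t ht
    rcases lt_trichotomy t n' with h | h | h
    · exact le_of_lt (hmono ⟨ht, h.le⟩ ⟨hn'pos, le_refl _⟩ h)
    · rw [h]
    · exact le_of_lt (hanti (le_refl n') h.le h)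
  · exact hmono.mono Set.Ioo_subset_Ioc_self
  · exact hanti.mono Set.Ioi_subset_Ici_self
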